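/- Let d ≥ 2 and δ ≥ 1 be integers, r = 1/4, ε = r²/((d-1)δ²). Let a ∈ ℝᵈ, i ∈ {1,…,d}, x ∈ {1,…,δ}ᵈ, and ℓ ∈ {1,…,δ} with ℓ ≤ x[i]. Then the Euclidean distance between C = a + ε·x and S = a + ((1-ε)·2r + εℓ)·eᵢ is strictly less than 2r. -/

import Mathlib

set_option maxHeartbeats 1000000 in
theorem stmt7 (d δ : ℕ) (hd : 2 ≤ d) (hδ : 1 ≤ δ) (r ε : ℝ)
    (hr : r = 1 / 4) (hε : ε = r ^ 2 / (((d : ℝ) - 1) * (δ : ℝ) ^ 2))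
    (a : EuclideanSpace ℝ (Fin d)) (i : Fin d) (x : Fin d → ℕ) (ℓ : ℕ)
    (hx : ∀ j, 1 ≤ x j ∧ x j ≤ δ) (hℓ1 : 1 ≤ ℓ) (hℓδ : ℓ ≤ δ) (hℓx : ℓ ≤ x i)
    (C S : EuclideanSpace ℝ (Fin d))
    (hC : C = fun j => a j + ε * (x j : ℝ))
    (hS : S = fun j => if j = i then a j + ((1 - ε) * (2 * r) + ε * ℓ) else a j) :
    dist C S < 2 * r := by
  have hd1 : (1 : ℝ) ≤ (d : ℝ) - 1 := by
    have : (2 : ℝ) ≤ d := by exact_mod_cast hd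
    linarith
  have hδ1 : (1 : ℝ) ≤ (δ : ℝ) := by exact_mod_cast hδ
  have hεpos : 0 < ε := by
    rw [hε, hr]; positivity
  have hεeq : ε * (((d : ℝ) - 1) * (δ : ℝ) ^ 2) = r ^ 2 := by
    rw [hε]; field_simp
  have hεδ : ε * (δ : ℝ) ≤ r ^ 2 := by
    have hgap : (0 : ℝ) ≤ ((d : ℝ) - 1) * (δ : ℝ) ^ 2 - (δ : ℝ) := by nlinarith
    nlinarith [mul_nonneg hεpos.le hgap]
  have hε16 : ε ≤ 1 / 16 := by nlinarith
  rw [EuclideanSpace.dist_eq]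
  have h2r : (0 : ℝ) < 2 * r := by rw [hr]; norm_num
  rw [show (2 * r) = Real.sqrt ((2 * r) ^ 2) by rw [Real.sqrt_sq h2r.le]]
  apply Real.sqrt_lt_sqrt (by positivity)
  simp only [Real.dist_eq, sq_abs]
  have hbound : ∀ j : Fin d, (C j - S j) ^ 2 ≤
      if j = i then ((1 - ε) * (2 * r)) ^ 2 else (ε * (δ : ℝ)) ^ 2 := by
    intro j
    by_cases hj : j = i
    · subst hj
      rw [if_pos rfl]
      simp only [hC, hS, if_pos rfl, if_true]
      have hterm : a j + ε * (x j : ℝ) - (a j + ((1 - ε) * (2 * r) + ε * ℓ))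
          = ε * ((x j : ℝ) - ℓ) - (1 - ε) * (2 * r) := by ring
      rw [hterm]
      have hxl : (ℓ : ℝ) ≤ (x j : ℝ) := by exact_mod_cast hℓx
      have hxiδ : (x j : ℝ) ≤ (δ : ℝ) := by exact_mod_cast (hx j).2
      have hℓ1' : (1 : ℝ) ≤ (ℓ : ℝ) := by exact_mod_cast hℓ1
      have h1 : 0 ≤ ε * ((x j : ℝ) - ℓ) := by
        apply mul_nonneg hεpos.le; linarith
      have h2 : ε * ((x j : ℝ) - ℓ) ≤ ε * (δ : ℝ) := by
        apply mul_le_mul_of_nonneg_left _ hεpos.le; linarith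
      have h3 : ε * (δ : ℝ) ≤ (1 - ε) * (2 * r) := by
        rw [hr] at hεδ ⊢; nlinarith
      nlinarith
    · simp only [hC, hS, if_neg hj]
      have hxjδ : (x j : ℝ) ≤ (δ : ℝ) := by exact_mod_cast (hx j).2
      have hxj1 : (1 : ℝ) ≤ (x j : ℝ) := by exact_mod_cast (hx j).1
      have h : a j + ε * (x j : ℝ) - a j = ε * (x j : ℝ) := by ring
      rw [h]
      exact pow_le_pow_left₀ (by positivity) (mul_le_mul_of_nonneg_left hxjδ hεpos.le) 2
  calc ∑ j, (C j - S j) ^ 2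
      ≤ ∑ j, (if j = i then ((1 - ε) * (2 * r)) ^ 2 else (ε * (δ : ℝ)) ^ 2) :=
        Finset.sum_le_sum fun j _ => hbound j
    _ = ((1 - ε) * (2 * r)) ^ 2 + ((d : ℝ) - 1) * (ε * (δ : ℝ)) ^ 2 := by
        rw [← Finset.add_sum_erase _ _ (Finset.mem_univ i)]
        simp only [if_pos rfl]
        congr 1
        rw [Finset.sum_congr rfl (fun j hj => if_neg (Finset.ne_of_mem_erase hj)),
          Finset.sum_const, Finset.card_erase_of_mem (Finset.mem_univ i),
          Finset.card_univ, Fintype.card_fin, nsmul_eq_mul]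
        have h1d : (1 : ℕ) ≤ d := le_trans one_le_two hd
        rw [Nat.cast_sub h1d, Nat.cast_one]
    _ < (2 * r) ^ 2 := by
        have key : ((d : ℝ) - 1) * (ε * (δ : ℝ)) ^ 2 = ε * r ^ 2 := by
          rw [hε]; field_simp
        rw [key, hr]
        nlinarith
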